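/- arXiv:2210.10210 — 2 statements merged into one kernel-verified Lean document; each statement's English description precedes it below -/
import Mathlib

section
/- Let d ≥ 1, let ℓ be a length scale with 0 < ℓ ≤ 2/√π, and let 0 < h < 1. Then the aliasing error for the squared-exponential kernel is bounded uniformly over x ∈ [−1,1]^d by | Σ_{n ∈ ℤ^d, n ≠ 0} G_ℓ(x + n/h) | ≤ 2d · 3^d · exp(−(1/2)((h^{-1}−1)/ℓ)²). -/
open Real

/-- The squared-exponential kernel `G_ℓ(x) = exp(−|x|²/(2ℓ²))` on `ℝ^d`. -/
noncomputable def G (d : ℕ) (ℓ : ℝ) (x : EuclideanSpace ℝ (Fin d)) : ℝ :=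
  Real.exp (-‖x‖ ^ 2 / (2 * ℓ ^ 2))

/-- The lattice point `c·n ∈ ℝ^d` for `n ∈ ℤ^d` and a scalar `c`. -/
noncomputable def lpt (d : ℕ) (c : ℝ) (n : Fin d → ℤ) : EuclideanSpace ℝ (Fin d) :=
  (EuclideanSpace.equiv (Fin d) ℝ).symm (fun i => c * (n i : ℝ))

lemma cubic_le_exp {t : ℝ} (ht : 0 ≤ t) : 1 + t + t^2/2 + t^3/6 ≤ Real.exp t :=
  calc 1 + t + t^2/2 + t^3/6 = ∑ i ∈ Finset.range 4, t^i / (Nat.factorial i) := by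
        simp [Finset.sum_range_succ, Nat.factorial]
    _ ≤ Real.exp t := Real.sum_le_exp_of_nonneg ht 4

lemma exp_neg_pi8 : Real.exp (-(π/8)) ≤ 0.677 := by
  have h1 : (3.141592:ℝ) < π := Real.pi_gt_d6
  have ht : (0.3926:ℝ) ≤ π/8 := by linarith
  have h2 : (1:ℝ) + 0.3926 + 0.3926^2/2 + 0.3926^3/6 ≤ Real.exp (π/8) :=
    (cubic_le_exp (by norm_num)).trans (Real.exp_le_exp.mpr ht)
  have h3 : (0.677:ℝ)⁻¹ ≤ Real.exp (π/8) := by nlinarith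
  rw [Real.exp_neg]
  calc (Real.exp (π/8))⁻¹ ≤ ((0.677:ℝ)⁻¹)⁻¹ := inv_anti₀ (by norm_num) h3
    _ = 0.677 := by norm_num

lemma r_cube_ineq {c : ℝ} (hc : π/8 ≤ c) :
    Real.exp (-c) + (Real.exp (-c))^3 ≤ 1 := by
  have h0 : (0:ℝ) < Real.exp (-c) := Real.exp_pos _
  have h1 : Real.exp (-c) ≤ 0.677 :=
    le_trans (Real.exp_le_exp.mpr (by linarith)) exp_neg_pi8
  nlinarith [pow_le_pow_left₀ h0.le h1 3]

/- ## Summability helpers -/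

lemma nat_le_sq (m : ℕ) : (m:ℝ) ≤ (m:ℝ)^2 := by
  have : m ≤ m^2 := Nat.le_self_pow two_ne_zero m
  exact_mod_cast this

lemma summable_gauss_nat {c : ℝ} (hc : 0 < c) :
    Summable (fun m : ℕ => Real.exp (-(c * (m:ℝ)^2))) := by
  refine Summable.of_nonneg_of_le (fun m => (Real.exp_pos _).le) (fun m => ?_)
    (summable_geometric_of_lt_one (Real.exp_pos (-c)).le
      (Real.exp_lt_one_iff.mpr (by linarith)))
  rw [← Real.exp_nat_mul]
  apply Real.exp_le_exp.mpr
  nlinarith [nat_le_sq m]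

lemma summable_gauss_int {c : ℝ} (hc : 0 < c) :
    Summable (fun k : ℤ => Real.exp (-(c * (k:ℝ)^2))) := by
  apply Summable.of_nat_of_neg
  · exact (summable_gauss_nat hc).congr (fun n => by norm_num)
  · exact (summable_gauss_nat hc).congr (fun n => by push_cast; ring_nf)

lemma summable_shift {c : ℝ} (hc : 0 < c) (y δ : ℝ) (hδ : 1 ≤ δ) :
    Summable (fun k : ℤ => Real.exp (-(c * (y + δ*(k:ℝ))^2))) := by
  have hδ0 : (0:ℝ) < δ := lt_of_lt_of_le one_pos hδ
  refine Summable.of_nonneg_of_le (fun k => (Real.exp_pos _).le) (fun k => ?_)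
    (((summable_gauss_int (c := c*δ^2/2) (by positivity)).mul_left (Real.exp (c * y^2))))
  rw [← Real.exp_add]
  apply Real.exp_le_exp.mpr
  nlinarith [sq_nonneg ((k:ℝ)*δ + 2*y), sq_nonneg (k:ℝ), sq_nonneg y]

/- ## Geometric bounds for 1-D sums -/

lemma sum_nat_tail {c : ℝ} (hc : π/8 ≤ c) :
    (∑' m : ℕ, Real.exp (-(c * ((m:ℝ)+1)^2))) ≤ 1 := by
  have hc0 : (0:ℝ) < c := lt_of_lt_of_le (by positivity) hc
  have hr0 : (0:ℝ) < Real.exp (-c) := Real.exp_pos _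
  have hr1 : Real.exp (-c) < 1 := Real.exp_lt_one_iff.mpr (by linarith)
  have hr31 : (Real.exp (-c))^3 < 1 := pow_lt_one₀ hr0.le hr1 (by norm_num)
  have hterm : ∀ m : ℕ, Real.exp (-(c * ((m:ℝ)+1)^2))
      ≤ Real.exp (-c) * ((Real.exp (-c))^3)^m := by
    intro m
    rw [← pow_mul, ← Real.exp_nat_mul, ← Real.exp_add]
    apply Real.exp_le_exp.mpr
    push_cast
    nlinarith [nat_le_sq m, hc0]
  have hgeom : Summable (fun m : ℕ => Real.exp (-c) * ((Real.exp (-c))^3)^m) :=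
    (summable_geometric_of_lt_one (by positivity) hr31).mul_left _
  have hsum : Summable (fun m : ℕ => Real.exp (-(c * ((m:ℝ)+1)^2))) :=
    Summable.of_nonneg_of_le (fun m => (Real.exp_pos _).le) hterm hgeom
  calc (∑' m : ℕ, Real.exp (-(c * ((m:ℝ)+1)^2)))
      ≤ ∑' m : ℕ, Real.exp (-c) * ((Real.exp (-c))^3)^m := Summable.tsum_le_tsum hterm hsum hgeom
    _ = Real.exp (-c) * (1 - (Real.exp (-c))^3)⁻¹ := by
        rw [tsum_mul_left, tsum_geometric_of_lt_one (by positivity) hr31]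
    _ ≤ 1 := by
        have h13 : 0 < 1 - (Real.exp (-c))^3 := by linarith
        rw [mul_inv_le_iff₀ h13, one_mul]
        have := r_cube_ineq hc
        linarith

lemma sum_nat_all {c : ℝ} (hc : π/8 ≤ c) :
    (∑' m : ℕ, Real.exp (-(c * (m:ℝ)^2))) ≤ 2 := by
  have hc0 : (0:ℝ) < c := lt_of_lt_of_le (by positivity) hc
  rw [Summable.tsum_eq_zero_add (summable_gauss_nat hc0)]
  have h0 : Real.exp (-(c * ((0:ℕ):ℝ)^2)) = 1 := by norm_num
  rw [h0]
  have e : (∑' m : ℕ, Real.exp (-(c * (((m+1:ℕ)):ℝ)^2)))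
      = ∑' m : ℕ, Real.exp (-(c * ((m:ℝ)+1)^2)) := by
    apply tsum_congr
    intro m
    congr 2
    push_cast
    ring
  rw [e]
  linarith [sum_nat_tail hc]

lemma poisson_le {b : ℝ} (hb : 0 < b) (x : ℝ) :
    (∑' k : ℤ, Real.exp (-(b * ((k:ℝ) + x)^2))) ≤ ∑' k : ℤ, Real.exp (-(b * (k:ℝ)^2)) := by
  have hπ : (0:ℝ) < π := Real.pi_pos
  set a : ℝ := b / π with ha_def
  have ha : 0 < a := div_pos hb hπ
  have hba : b = π * a := by rw [ha_def]; field_simp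
  -- the real sum with linear term
  set g : ℤ → ℝ := fun k => Real.exp (-(π*a*(k:ℝ)^2) + 2*π*(-(a*x))*(k:ℝ)) with hg
  have hgsum : Summable g := by
    apply (summable_shift (c := π*a) (by positivity) x 1 le_rfl).mul_left
      (Real.exp (π*a*x^2)) |>.congr
    intro k
    rw [hg, ← Real.exp_add]
    congr 1
    ring
  -- step 1 : LHS = exp(-πax²) * ∑ g
  have step1 : (∑' k : ℤ, Real.exp (-(b * ((k:ℝ) + x)^2)))
      = Real.exp (-(π*a*x^2)) * ∑' k : ℤ, g k := by
    rw [← tsum_mul_left]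
    apply tsum_congr
    intro k
    rw [hg, ← Real.exp_add, hba]
    congr 1
    ring
  -- complex key identity
  have key := Complex.tsum_exp_neg_quadratic (a := (a:ℂ)) (by simpa using ha) (-((a:ℂ)*(x:ℂ)))
  -- cast the g-sum to ℂ
  have hcast : ((∑' k : ℤ, g k : ℝ) : ℂ)
      = ∑' n : ℤ, Complex.exp (-(π:ℂ) * (a:ℂ) * (n:ℂ)^2 + 2*(π:ℂ)*(-((a:ℂ)*(x:ℂ)))*(n:ℂ)) := by
    rw [Complex.ofReal_tsum]
    apply tsum_congr
    intro k
    rw [hg]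
    rw [Complex.ofReal_exp]
    congr 1
    push_cast
    ring
  -- norm bound on the RHS of key
  have hnormterm : ∀ n : ℤ, ‖Complex.exp (-(π:ℂ) / (a:ℂ) * ((n:ℂ) + Complex.I * (-((a:ℂ)*(x:ℂ))))^2)‖
      = Real.exp (π*a*x^2) * Real.exp (-((π/a) * (n:ℝ)^2)) := by
    intro n
    rw [← Real.exp_add, Complex.norm_exp]
    congr 1
    have : (-(π:ℂ) / (a:ℂ) * ((n:ℂ) + Complex.I * (-((a:ℂ)*(x:ℂ))))^2)
        = Complex.ofReal (π*a*x^2 - (π/a) * (n:ℝ)^2) + Complex.ofReal (2*π*x*(n:ℝ)) * Complex.I := by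
      have ha' : (a:ℂ) ≠ 0 := by exact_mod_cast ha.ne'
      push_cast
      field_simp
      ring_nf
      rw [Complex.I_sq]
      ring
    rw [this]
    simp only [Complex.add_re, Complex.mul_I_re, Complex.ofReal_im, Complex.ofReal_re, neg_zero]
    ring
  have hsumnorm : Summable (fun n : ℤ =>
      ‖Complex.exp (-(π:ℂ) / (a:ℂ) * ((n:ℂ) + Complex.I * (-((a:ℂ)*(x:ℂ))))^2)‖) := by
    apply ((summable_gauss_int (c := π/a) (by positivity)).mul_left (Real.exp (π*a*x^2))).congr
    intro n
    rw [hnormterm n]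
  -- bound ∑ g
  have habs : (∑' k : ℤ, g k) ≤ (a ^ (-(1/2) : ℝ)) * (Real.exp (π*a*x^2) * ∑' n : ℤ, Real.exp (-((π/a) * (n:ℝ)^2))) := by
    have hnn : (0:ℝ) ≤ ∑' k : ℤ, g k := tsum_nonneg (fun k => (Real.exp_pos _).le)
    have : (∑' k : ℤ, g k) = ‖((∑' k : ℤ, g k : ℝ) : ℂ)‖ := by
      rw [Complex.norm_real, Real.norm_eq_abs, abs_of_nonneg hnn]
    rw [this, hcast, key]
    rw [norm_mul]
    have h12 : ‖1 / (a:ℂ) ^ (1/2 : ℂ)‖ = a ^ (-(1/2) : ℝ) := by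
      rw [norm_div, norm_one,
        Complex.norm_cpow_eq_rpow_re_of_pos ha]
      simp [Real.rpow_neg ha.le]
    rw [h12]
    apply mul_le_mul_of_nonneg_left _ (Real.rpow_nonneg ha.le _)
    refine le_trans (norm_tsum_le_tsum_norm hsumnorm) ?_
    rw [← tsum_mul_left]
    apply le_of_eq
    exact tsum_congr hnormterm
  -- identify RHS via Poisson (Real version)
  have hreal := Real.tsum_exp_neg_mul_int_sq ha
  -- ∑' n, exp(-π a n²) = 1/a^(1/2) * ∑' n, exp (-π/a n²)
  have hRHS : (∑' k : ℤ, Real.exp (-(b * (k:ℝ)^2)))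
      = (a ^ (-(1/2) : ℝ)) * ∑' n : ℤ, Real.exp (-((π/a) * (n:ℝ)^2)) := by
    have e1 : (∑' k : ℤ, Real.exp (-(b * (k:ℝ)^2))) = ∑' n : ℤ, Real.exp (-π * a * (n:ℝ)^2) := by
      apply tsum_congr; intro k; congr 1; rw [hba]; ring
    have e2 : (∑' n : ℤ, Real.exp (-π / a * (n:ℝ)^2)) = ∑' n : ℤ, Real.exp (-((π/a) * (n:ℝ)^2)) := by
      apply tsum_congr; intro k; congr 1; ring
    rw [e1, hreal, e2, Real.rpow_neg ha.le, one_div]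
  rw [step1, hRHS]
  calc Real.exp (-(π*a*x^2)) * ∑' k : ℤ, g k
      ≤ Real.exp (-(π*a*x^2)) * ((a ^ (-(1/2) : ℝ)) * (Real.exp (π*a*x^2) * ∑' n : ℤ, Real.exp (-((π/a) * (n:ℝ)^2)))) :=
        mul_le_mul_of_nonneg_left habs (Real.exp_pos _).le
    _ = (Real.exp (-(π*a*x^2)) * Real.exp (π*a*x^2)) * ((a ^ (-(1/2) : ℝ)) * ∑' n : ℤ, Real.exp (-((π/a) * (n:ℝ)^2))) := by ring
    _ = (a ^ (-(1/2) : ℝ)) * ∑' n : ℤ, Real.exp (-((π/a) * (n:ℝ)^2)) := by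
        rw [← Real.exp_add]
        simp

lemma sum_int_all {c : ℝ} (hc : π/8 ≤ c) :
    (∑' k : ℤ, Real.exp (-(c * (k:ℝ)^2))) ≤ 3 := by
  have hc0 : (0:ℝ) < c := lt_of_lt_of_le (by positivity) hc
  set g : ℤ → ℝ := fun k => Real.exp (-(c * (k:ℝ)^2)) with hg
  have cast1 : ∀ n : ℕ, g n = Real.exp (-(c * (n:ℝ)^2)) := fun n => by
    simp only [hg]; norm_num
  have cast2 : ∀ n : ℕ, g (-(n:ℤ)) = Real.exp (-(c * (n:ℝ)^2)) := fun n => by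
    simp only [hg]; push_cast; ring_nf
  have h1 : Summable (fun n : ℕ => g n) :=
    (summable_gauss_nat hc0).congr (fun n => (cast1 n).symm)
  have h2 : Summable (fun n : ℕ => g (-(n:ℤ))) :=
    (summable_gauss_nat hc0).congr (fun n => (cast2 n).symm)
  have hg0 : g 0 = 1 := by simp only [hg]; norm_num
  rw [Summable.tsum_of_nat_of_neg h1 h2, hg0]
  have e1 : (∑' n : ℕ, g n) ≤ 2 := le_trans (le_of_eq (tsum_congr cast1)) (sum_nat_all hc)
  have e2 : (∑' n : ℕ, g (-(n:ℤ))) ≤ 2 := le_trans (le_of_eq (tsum_congr cast2)) (sum_nat_all hc)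
  linarith

lemma T_bound {c δ y : ℝ} (hc : π/8 ≤ c) (hδ : 1 ≤ δ) :
    (∑' k : ℤ, Real.exp (-(c * (y + δ*(k:ℝ))^2))) ≤ 3 := by
  have hc0 : (0:ℝ) < c := lt_of_lt_of_le (by positivity) hc
  have hδ0 : (0:ℝ) < δ := lt_of_lt_of_le one_pos hδ
  have h1 : ∀ k : ℤ, (-(c * (y + δ*(k:ℝ))^2)) = (-((c*δ^2) * ((k:ℝ) + y/δ)^2)) := by
    intro k
    have : (k:ℝ) + y/δ = (y + δ*(k:ℝ))/δ := by field_simp; ring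
    rw [this, div_pow]
    field_simp
  simp only [h1]
  have hb : (0:ℝ) < c*δ^2 := by positivity
  refine le_trans (poisson_le hb (y/δ)) ?_
  have hmono : c ≤ c * δ^2 := by
    nlinarith [mul_nonneg hc0.le (mul_nonneg (sub_nonneg.mpr hδ) (show (0:ℝ) ≤ δ + 1 by linarith))]
  exact sum_int_all (le_trans hc hmono)

lemma side_bound {c E : ℝ} (hc : π/8 ≤ c) (hE0 : 0 ≤ E)
    (g : ℕ → ℝ) (hg0 : g 0 = 0) (hgs : Summable g)
    (hgb : ∀ n : ℕ, g (n+1) ≤ E * Real.exp (-(c * (n:ℝ)^2))) :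
    (∑' n : ℕ, g n) ≤ 2 * E := by
  have hc0 : (0:ℝ) < c := lt_of_lt_of_le (by positivity) hc
  rw [Summable.tsum_eq_zero_add hgs, hg0, zero_add]
  calc (∑' n : ℕ, g (n+1)) ≤ ∑' n : ℕ, E * Real.exp (-(c * (n:ℝ)^2)) :=
      Summable.tsum_le_tsum hgb ((summable_nat_add_iff 1).mpr hgs) ((summable_gauss_nat hc0).mul_left E)
    _ = E * ∑' n : ℕ, Real.exp (-(c * (n:ℝ)^2)) := tsum_mul_left
    _ ≤ E * 2 := mul_le_mul_of_nonneg_left (sum_nat_all hc) hE0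
    _ = 2 * E := by ring

lemma tail_bound {c δ y : ℝ} (hc : π/8 ≤ c) (hδ : 1 ≤ δ) (hy : |y| ≤ 1) :
    (∑' k : ℤ, if k = 0 then 0 else Real.exp (-(c * (y + δ*(k:ℝ))^2)))
      ≤ 6 * Real.exp (-((δ-1)^2 * c)) := by
  have hc0 : (0:ℝ) < c := lt_of_lt_of_le (by positivity) hc
  have hδ0 : (0:ℝ) < δ := lt_of_lt_of_le one_pos hδ
  set E : ℝ := Real.exp (-((δ-1)^2 * c)) with hE
  have hE0 : 0 < E := Real.exp_pos _
  set L : ℤ → ℝ := fun k => if k = 0 then 0 else Real.exp (-(c * (y + δ*(k:ℝ))^2)) with hL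
  have hpt : ∀ k : ℤ, 1 ≤ |(k:ℝ)| →
      Real.exp (-(c * (y + δ*(k:ℝ))^2)) ≤ E * Real.exp (-(c * (|(k:ℝ)| - 1)^2)) := by
    intro k hm1
    set m : ℝ := |(k:ℝ)| with hm
    have habs : δ * m - 1 ≤ |y + δ*(k:ℝ)| := by
      have h1 : |δ*(k:ℝ)| ≤ |y + δ*(k:ℝ)| + |y| := by
        simpa using abs_sub (y + δ*(k:ℝ)) y
      have h2 : |δ*(k:ℝ)| = δ * m := by rw [hm, abs_mul, abs_of_pos hδ0]
      linarith
    have hnn : 0 ≤ δ * m - 1 := by nlinarith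
    have hsq : (δ*m - 1)^2 ≤ (y + δ*(k:ℝ))^2 := by
      rw [← sq_abs (y + δ*(k:ℝ))]
      exact pow_le_pow_left₀ hnn habs 2
    have key : (δ-1)^2 + (m-1)^2 ≤ (y + δ*(k:ℝ))^2 := by
      have ha : (0:ℝ) ≤ δ - 1 := by linarith
      have hb : (0:ℝ) ≤ m - 1 := by linarith
      nlinarith [mul_nonneg ha hb, mul_nonneg (mul_nonneg ha ha) (mul_nonneg hb hb),
        mul_nonneg (mul_nonneg ha ha) hb, mul_nonneg ha (mul_nonneg hb hb)]
    rw [hE, ← Real.exp_add]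
    apply Real.exp_le_exp.mpr
    nlinarith
  have hsumL : Summable L := by
    refine Summable.of_nonneg_of_le (fun k => ?_) (fun k => ?_) (summable_shift hc0 y δ hδ)
    · rw [hL]; by_cases hk : k = 0 <;> simp [hk, (Real.exp_pos _).le]
    · rw [hL]; by_cases hk : k = 0 <;> simp [hk, (Real.exp_pos _).le]
  have hinj2 : Function.Injective (fun n : ℕ => -(n:ℤ)) := by
    intro p q hpq; simpa using hpq
  have hsum1 : Summable (fun n : ℕ => L n) := hsumL.comp_injective (fun p q hpq => by exact_mod_cast hpq)
  have hsum2 : Summable (fun n : ℕ => L (-(n:ℤ))) := hsumL.comp_injective hinj2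
  have e1 : (∑' n : ℕ, L n) ≤ 2*E := by
    apply side_bound hc hE0.le _ (by simp [hL]) hsum1
    intro n
    have h1 : (1:ℝ) ≤ |(((n+1:ℕ):ℤ):ℝ)| := by
      push_cast
      rw [abs_of_nonneg (by positivity)]
      linarith [Nat.cast_nonneg (α := ℝ) n]
    have h2 := hpt ((n+1:ℕ):ℤ) h1
    have h3 : |(((n+1:ℕ):ℤ):ℝ)| = (n:ℝ) + 1 := by
      push_cast
      rw [abs_of_nonneg (by positivity)]
    rw [h3] at h2
    have h4 : ((n:ℝ) + 1 - 1)^2 = (n:ℝ)^2 := by ring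
    rw [h4] at h2
    have h5 : L ((n+1:ℕ):ℤ) = Real.exp (-(c * (y + δ*(((n+1:ℕ):ℤ):ℝ))^2)) := by
      rw [hL]
      exact if_neg (by exact_mod_cast Nat.succ_ne_zero n)
    rw [h5]
    exact h2
  have e2 : (∑' n : ℕ, L (-(n:ℤ))) ≤ 2*E := by
    apply side_bound hc hE0.le _ (by simp [hL]) hsum2
    intro n
    have hc3 : ((-((n+1:ℕ):ℤ) : ℤ):ℝ) = -((n:ℝ)+1) := by push_cast; ring
    have h1 : (1:ℝ) ≤ |((-((n+1:ℕ):ℤ) : ℤ):ℝ)| := by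
      rw [hc3, abs_neg, abs_of_nonneg (by positivity)]
      linarith [Nat.cast_nonneg (α := ℝ) n]
    have h2 := hpt (-((n+1:ℕ):ℤ)) h1
    have h3 : |((-((n+1:ℕ):ℤ) : ℤ):ℝ)| = (n:ℝ) + 1 := by
      rw [hc3, abs_neg, abs_of_nonneg (by positivity)]
    rw [h3] at h2
    have h4 : ((n:ℝ) + 1 - 1)^2 = (n:ℝ)^2 := by ring
    rw [h4] at h2
    have h5 : L (-((n+1:ℕ):ℤ)) = Real.exp (-(c * (y + δ*((-((n+1:ℕ):ℤ) : ℤ):ℝ))^2)) := by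
      rw [hL]
      exact if_neg (by omega)
    rw [h5]
    exact h2
  have hL0 : L 0 = 0 := by simp [hL]
  calc (∑' k : ℤ, L k) = (∑' n : ℕ, L n) + (∑' n : ℕ, L (-(n:ℤ))) - L 0 :=
      Summable.tsum_of_nat_of_neg hsum1 hsum2
    _ ≤ 2*E + 2*E - 0 := by rw [hL0]; gcongr
    _ ≤ 6 * E := by linarith

lemma pi_prod_eq (d : ℕ) (f : Fin d → ℤ → ℝ) (h0 : ∀ i k, 0 ≤ f i k)
    (hs : ∀ i, Summable (f i)) :
    Summable (fun n : (Fin d → ℤ) => ∏ i, f i (n i)) ∧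
      (∑' n : (Fin d → ℤ), ∏ i, f i (n i)) = ∏ i, ∑' k, f i k := by
  induction d with
  | zero =>
    constructor
    · exact Summable.of_finite
    · rw [tsum_eq_single 0 (fun b hb => absurd (Subsingleton.elim b 0) hb)]
      simp
  | succ d ih =>
    obtain ⟨ihS, ihE⟩ := ih (fun i => f i.succ) (fun i k => h0 i.succ k) (fun i => hs i.succ)
    set P : (Fin d → ℤ) → ℝ := fun m => ∏ i, f i.succ (m i) with hP
    have hP0 : ∀ m, 0 ≤ P m := fun m => Finset.prod_nonneg (fun i _ => h0 i.succ (m i))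
    have hprod : Summable (fun p : ℤ × (Fin d → ℤ) => f 0 p.1 * P p.2) :=
      (hs 0).mul_of_nonneg ihS (fun k => h0 0 k) hP0
    have he : ∀ p : ℤ × (Fin d → ℤ),
        (∏ i, f i ((Fin.consEquiv (fun _ : Fin (d+1) => ℤ)) p i)) = f 0 p.1 * P p.2 := by
      intro p
      rw [Fin.prod_univ_succ]
      simp [Fin.consEquiv, hP]
    constructor
    · rw [← Equiv.summable_iff (Fin.consEquiv fun _ => ℤ)]
      exact hprod.congr (fun p => (he p).symm)
    · rw [← (Fin.consEquiv fun _ => ℤ).tsum_eq, tsum_congr he,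
        ← Summable.tsum_mul_tsum (hs 0) ihS hprod, ihE, Fin.prod_univ_succ]

lemma pi_tail_le (d : ℕ) (f : Fin d → ℤ → ℝ) (ε : ℝ) (hε : 0 ≤ ε)
    (h0 : ∀ i k, 0 ≤ f i k) (h1 : ∀ i k, f i k ≤ 1) (hs : ∀ i, Summable (f i))
    (h3 : ∀ i, (∑' k, f i k) ≤ 3)
    (ht : ∀ i, (∑' k : ℤ, if k = 0 then 0 else f i k) ≤ ε) :
    (∑' n : (Fin d → ℤ), if n = 0 then 0 else ∏ i, f i (n i)) ≤ d * 3^(d-1) * ε := by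
  induction d with
  | zero =>
    have : ∀ n : (Fin 0 → ℤ), (if n = 0 then 0 else ∏ i, f i (n i)) = 0 := by
      intro n
      rw [if_pos (Subsingleton.elim n 0)]
    rw [tsum_congr this, tsum_zero]
    simp
  | succ d ih =>
    have ihd := ih (fun i => f i.succ) (fun i k => h0 i.succ k) (fun i k => h1 i.succ k)
      (fun i => hs i.succ) (fun i => h3 i.succ) (fun i => ht i.succ)
    set P : (Fin d → ℤ) → ℝ := fun m => ∏ i, f i.succ (m i) with hP
    obtain ⟨hPS, hPE⟩ := pi_prod_eq d (fun i => f i.succ) (fun i k => h0 i.succ k)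
      (fun i => hs i.succ)
    have hP0 : ∀ m, 0 ≤ P m := fun m => Finset.prod_nonneg (fun i _ => h0 i.succ (m i))
    have hP3 : (∑' m, P m) ≤ 3^d := by
      rw [hPE]
      calc (∏ i : Fin d, ∑' k, f i.succ k) ≤ ∏ _i : Fin d, (3:ℝ) :=
          Finset.prod_le_prod (fun i _ => tsum_nonneg (fun k => h0 i.succ k))
            (fun i _ => h3 i.succ)
        _ = 3^d := by simp
    -- the four auxiliary one-dim functions
    set a1 : ℤ → ℝ := fun k => if k = 0 then 0 else f 0 k with ha1
    set a2 : ℤ → ℝ := fun k => if k = 0 then f 0 k else 0 with ha2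
    set b2 : (Fin d → ℤ) → ℝ := fun m => if m = 0 then 0 else P m with hb2
    have ha1nn : ∀ k, 0 ≤ a1 k := fun k => by
      rw [ha1]; by_cases hk : k = 0 <;> simp [hk, h0 0 k, h0 0 0]
    have ha2nn : ∀ k, 0 ≤ a2 k := fun k => by
      rw [ha2]; by_cases hk : k = 0 <;> simp [hk, h0 0 k, h0 0 0]
    have hb2nn : ∀ m, 0 ≤ b2 m := fun m => by
      by_cases hm : m = 0
      · have hh : b2 m = 0 := by rw [hb2]; simp [hm]
        rw [hh]
      · have hh : b2 m = P m := by rw [hb2]; simp [hm]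
        rw [hh]; exact hP0 m
    have ha1s : Summable a1 := by
      refine Summable.of_nonneg_of_le ha1nn (fun k => ?_) (hs 0)
      rw [ha1]; by_cases hk : k = 0 <;> simp [hk, h0 0 k, h0 0 0]
    have ha2s : Summable a2 := by
      refine Summable.of_nonneg_of_le ha2nn (fun k => ?_) (hs 0)
      rw [ha2]; by_cases hk : k = 0 <;> simp [hk, h0 0 k, h0 0 0]
    have hb2s : Summable b2 := by
      refine Summable.of_nonneg_of_le hb2nn (fun m => ?_) hPS
      by_cases hm : m = 0
      · have hh : b2 m = 0 := by rw [hb2]; simp [hm]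
        rw [hh]; exact hP0 m
      · have hh : b2 m = P m := by rw [hb2]; simp [hm]
        rw [hh]
    have hs1 : Summable (fun p : ℤ × (Fin d → ℤ) => a1 p.1 * P p.2) :=
      ha1s.mul_of_nonneg hPS ha1nn hP0
    have hs2 : Summable (fun p : ℤ × (Fin d → ℤ) => a2 p.1 * b2 p.2) :=
      ha2s.mul_of_nonneg hb2s ha2nn hb2nn
    -- pointwise identity
    have hsplit : ∀ p : ℤ × (Fin d → ℤ),
        (if (Fin.consEquiv (fun _ : Fin (d+1) => ℤ)) p = 0 then 0
          else ∏ i, f i ((Fin.consEquiv (fun _ : Fin (d+1) => ℤ)) p i))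
        = a1 p.1 * P p.2 + a2 p.1 * b2 p.2 := by
      intro p
      have hcons : ((Fin.consEquiv (fun _ : Fin (d+1) => ℤ)) p = 0) ↔ (p.1 = 0 ∧ p.2 = 0) :=
        Matrix.cons_eq_zero_iff
      have hprodval : (∏ i, f i ((Fin.consEquiv (fun _ : Fin (d+1) => ℤ)) p i))
          = f 0 p.1 * P p.2 := by
        rw [Fin.prod_univ_succ]
        simp [Fin.consEquiv, hP]
      by_cases hk : p.1 = 0
      · by_cases hm : p.2 = 0
        · rw [if_pos (hcons.mpr ⟨hk, hm⟩), ha1, ha2, hb2]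
          simp [hk, hm]
        · rw [if_neg (fun hc => hm (hcons.mp hc).2), hprodval, ha1, ha2, hb2]
          simp [hk, hm]
      · rw [if_neg (fun hc => hk (hcons.mp hc).1), hprodval, ha1, ha2, hb2]
        simp [hk]
    -- sum it
    rw [← (Fin.consEquiv fun _ => ℤ).tsum_eq, tsum_congr hsplit]
    rw [Summable.tsum_add hs1 hs2]
    have t1 : (∑' p : ℤ × (Fin d → ℤ), a1 p.1 * P p.2) ≤ ε * 3^d := by
      rw [← Summable.tsum_mul_tsum ha1s hPS hs1]
      apply mul_le_mul (ht 0) hP3 (tsum_nonneg hP0) hε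
    have t2 : (∑' p : ℤ × (Fin d → ℤ), a2 p.1 * b2 p.2) ≤ d * 3^(d-1) * ε := by
      rw [← Summable.tsum_mul_tsum ha2s hb2s hs2]
      have ha2sum : (∑' k, a2 k) = f 0 0 := by
        rw [tsum_eq_single 0 (fun b hb => by rw [ha2]; simp [hb])]
        rw [ha2]; simp
      have hle1 : (∑' k, a2 k) ≤ 1 := by rw [ha2sum]; exact h1 0 0
      calc (∑' k, a2 k) * (∑' m, b2 m) ≤ 1 * (d * 3^(d-1) * ε) := by
            apply mul_le_mul hle1 ihd (tsum_nonneg hb2nn)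
            norm_num
        _ = d * 3^(d-1) * ε := by ring
    have hpow : (3:ℝ)^(d-1) ≤ 3^d := by
      apply pow_le_pow_right₀ (by norm_num)
      omega
    have hcast : ((d+1:ℕ):ℝ) = (d:ℝ) + 1 := by push_cast; ring
    calc (∑' p : ℤ × (Fin d → ℤ), a1 p.1 * P p.2) + (∑' p : ℤ × (Fin d → ℤ), a2 p.1 * b2 p.2)
        ≤ ε * 3^d + d * 3^(d-1) * ε := add_le_add t1 t2
      _ ≤ ε * 3^d + d * 3^d * ε := by
          have : (d:ℝ) * 3^(d-1) * ε ≤ d * 3^d * ε := by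
            apply mul_le_mul_of_nonneg_right _ hε
            apply mul_le_mul_of_nonneg_left hpow (Nat.cast_nonneg d)
          linarith
      _ = ((d:ℝ)+1) * 3^d * ε := by ring
      _ = ((d+1:ℕ):ℝ) * 3^((d+1)-1) * ε := by rw [hcast]; norm_num

theorem stmt_1 (d : ℕ) (hd : 1 ≤ d) (ℓ h : ℝ) (hℓ0 : 0 < ℓ)
    (hℓ : ℓ ≤ 2 / Real.sqrt Real.pi) (hh0 : 0 < h) (hh1 : h < 1)
    (x : EuclideanSpace ℝ (Fin d)) (hx : ∀ i, x i ∈ Set.Icc (-1 : ℝ) 1) :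
    |∑' n : {n : Fin d → ℤ // n ≠ 0}, G d ℓ (x + lpt d h⁻¹ n.1)|
      ≤ 2 * d * 3 ^ d * Real.exp (-(1 / 2) * ((h⁻¹ - 1) / ℓ) ^ 2) := by
  have hπ : (0:ℝ) < π := Real.pi_pos
  have hδ : (1:ℝ) ≤ h⁻¹ := by
    rw [← one_div, le_div_iff₀ hh0]
    linarith
  set c : ℝ := 1/(2*ℓ^2) with hc_def
  have hc0 : 0 < c := by positivity
  have hc8 : π/8 ≤ c := by
    have h2 : (2/Real.sqrt π)^2 = 4/π := by
      rw [div_pow, Real.sq_sqrt hπ.le]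
      norm_num
    have hs : ℓ^2 ≤ 4/π := by
      rw [← h2]
      exact pow_le_pow_left₀ hℓ0.le hℓ 2
    rw [hc_def, div_le_div_iff₀ (by norm_num) (by positivity)]
    have h4 : ℓ^2 * π ≤ 4 := by
      rw [le_div_iff₀ hπ] at hs
      nlinarith
    nlinarith
  set f : Fin d → ℤ → ℝ := fun i k => Real.exp (-(c * (x i + h⁻¹ * (k:ℝ))^2)) with hf
  have hcomp : ∀ (n : Fin d → ℤ) (i : Fin d), (x + lpt d h⁻¹ n) i = x i + h⁻¹ * (n i : ℝ) :=
    fun n i => rfl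
  have hGf : ∀ n : Fin d → ℤ, G d ℓ (x + lpt d h⁻¹ n) = ∏ i, f i (n i) := by
    intro n
    have key : -‖x + lpt d h⁻¹ n‖^2/(2*ℓ^2) = ∑ i, -(c * (x i + h⁻¹*((n i):ℝ))^2) := by
      rw [EuclideanSpace.norm_eq,
        Real.sq_sqrt (Finset.sum_nonneg fun i _ => by positivity)]
      rw [neg_div, Finset.sum_div, ← Finset.sum_neg_distrib]
      apply Finset.sum_congr rfl
      intro i _
      rw [hcomp n i, Real.norm_eq_abs, sq_abs, hc_def]
      ring
    rw [G, key, Real.exp_sum]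
  have hxi : ∀ i, |x i| ≤ 1 := fun i => abs_le.mpr ⟨(hx i).1, (hx i).2⟩
  have hf0 : ∀ i k, 0 ≤ f i k := fun i k => by rw [hf]; exact (Real.exp_pos _).le
  have hf1 : ∀ i k, f i k ≤ 1 := fun i k => by
    rw [hf]
    apply Real.exp_le_one_iff.mpr
    have : 0 ≤ c * (x i + h⁻¹ * (k:ℝ))^2 := by positivity
    linarith
  have hfs : ∀ i, Summable (f i) := fun i => by
    rw [hf]; exact summable_shift hc0 (x i) h⁻¹ hδ
  have hf3 : ∀ i, (∑' k, f i k) ≤ 3 := fun i => by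
    rw [hf]; exact T_bound hc8 hδ
  have hft : ∀ i, (∑' k : ℤ, if k = 0 then 0 else f i k)
      ≤ 6 * Real.exp (-((h⁻¹-1)^2 * c)) := fun i => by
    rw [hf]; exact tail_bound hc8 hδ (hxi i)
  -- rewrite the subtype sum
  have hsub : (∑' n : {n : Fin d → ℤ // n ≠ 0}, G d ℓ (x + lpt d h⁻¹ n.1))
      = ∑' n : Fin d → ℤ, (if n = 0 then 0 else ∏ i, f i (n i)) := by
    calc (∑' n : {n : Fin d → ℤ // n ≠ 0}, G d ℓ (x + lpt d h⁻¹ n.1))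
        = ∑' (n : ↥{n : Fin d → ℤ | n ≠ 0}), G d ℓ (x + lpt d h⁻¹ n.1) := rfl
      _ = ∑' (n : Fin d → ℤ), Set.indicator {n : Fin d → ℤ | n ≠ 0}
            (fun n => G d ℓ (x + lpt d h⁻¹ n)) n :=
          tsum_subtype {n : Fin d → ℤ | n ≠ 0} (fun n => G d ℓ (x + lpt d h⁻¹ n))
      _ = ∑' n : Fin d → ℤ, (if n = 0 then 0 else ∏ i, f i (n i)) := ?_
    apply tsum_congr
    intro n
    by_cases hn : n = 0
    · simp [Set.indicator, hn]
    · simp [Set.indicator, hn, hGf n]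
  have hnn : (0:ℝ) ≤ ∑' n : {n : Fin d → ℤ // n ≠ 0}, G d ℓ (x + lpt d h⁻¹ n.1) :=
    tsum_nonneg (fun n => (Real.exp_pos _).le)
  rw [abs_of_nonneg hnn, hsub]
  have hAeq : (-(1/2) * ((h⁻¹ - 1)/ℓ)^2) = -((h⁻¹-1)^2 * c) := by
    rw [hc_def, div_pow]
    ring
  refine le_trans (pi_tail_le d f _ (by positivity) hf0 hf1 hfs hf3 hft) ?_
  rw [hAeq]
  obtain ⟨e, rfl⟩ : ∃ e, d = e + 1 := ⟨d - 1, by omega⟩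
  apply le_of_eq
  simp only [Nat.add_sub_cancel]
  push_cast
  ring
end

section
/- Let y ∈ ℝ^N, let K and K̃ be N×N real symmetric positive semidefinite matrices, let σ > 0, and let α, α̃ ∈ ℝ^N be the unique solutions of (K + σ²I)α = y and (K̃ + σ²I)α̃ = y. Let μ = Kα be the vector of true posterior means at the data points and μ̃ = K̃α̃ its approximation. Then ‖μ̃ − μ‖ ≤ (‖K̃ − K‖ / σ²) · ‖y‖, where ‖·‖ denotes the Euclidean norm for vectors and the operator (spectral) norm for matrices. -/
/-- Operator (spectral) norm of a real square matrix, induced by the Euclidean norm. -/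
noncomputable def opNorm {N : ℕ} (A : Matrix (Fin N) (Fin N) ℝ) : ℝ :=
  ‖Matrix.toEuclideanCLM (𝕜 := ℝ) A‖

/-- Euclidean norm of a vector in `ℝ^N`. -/
noncomputable def vecNorm {N : ℕ} (v : Fin N → ℝ) : ℝ :=
  Real.sqrt (∑ i, v i ^ 2)

open Matrix

lemma vecNorm_eq {N : ℕ} (v : Fin N → ℝ) :
    vecNorm v = ‖(WithLp.equiv 2 (Fin N → ℝ)).symm v‖ := by
  rw [EuclideanSpace.norm_eq]
  simp [vecNorm, Real.norm_eq_abs, sq_abs]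

lemma vecNorm_nonneg {N : ℕ} (v : Fin N → ℝ) : 0 ≤ vecNorm v := by
  rw [vecNorm_eq]; exact norm_nonneg _

lemma vecNorm_smul {N : ℕ} (c : ℝ) (v : Fin N → ℝ) :
    vecNorm (c • v) = |c| * vecNorm v := by
  rw [vecNorm_eq, vecNorm_eq, WithLp.equiv_symm_apply, WithLp.toLp_smul, norm_smul, Real.norm_eq_abs]

lemma mulVec_bound {N : ℕ} (A : Matrix (Fin N) (Fin N) ℝ) (x : Fin N → ℝ) :
    vecNorm (A.mulVec x) ≤ opNorm A * vecNorm x := by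
  rw [vecNorm_eq, vecNorm_eq]
  have h : A.mulVec x = Matrix.toLin' A x := (Matrix.toLin'_apply A x).symm
  rw [h, show (WithLp.equiv 2 (Fin N → ℝ)).symm (Matrix.toLin' A x) = Matrix.toEuclideanCLM (𝕜 := ℝ) A ((WithLp.equiv 2 (Fin N → ℝ)).symm x) from rfl]
  exact (Matrix.toEuclideanCLM (𝕜 := ℝ) A).le_opNorm _

lemma dot_le {N : ℕ} (x y : Fin N → ℝ) :
    x ⬝ᵥ y ≤ vecNorm x * vecNorm y := by
  rw [vecNorm_eq, vecNorm_eq]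
  have := real_inner_le_norm ((WithLp.equiv 2 (Fin N → ℝ)).symm x)
      ((WithLp.equiv 2 (Fin N → ℝ)).symm y)
  simpa [PiLp.inner_apply, dotProduct, RCLike.inner_apply, mul_comm] using this

lemma dot_self {N : ℕ} (v : Fin N → ℝ) : v ⬝ᵥ v = vecNorm v ^ 2 := by
  rw [vecNorm, Real.sq_sqrt (by positivity)]
  simp [dotProduct, sq]

lemma vecNorm_eq_zero {N : ℕ} {v : Fin N → ℝ} (h : vecNorm v = 0) : v = 0 := by
  have h2 : ‖(WithLp.equiv 2 (Fin N → ℝ)).symm v‖ = 0 := by rw [← vecNorm_eq]; exact h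
  have := norm_eq_zero.mp h2
  funext i
  have : ((WithLp.equiv 2 (Fin N → ℝ)).symm v) i = 0 := by rw [this]; rfl
  exact this

lemma coercive {N : ℕ} {M : Matrix (Fin N) (Fin N) ℝ} (hM : M.PosSemidef) (σ : ℝ)
    (v : Fin N → ℝ) :
    σ ^ 2 * vecNorm v ≤ vecNorm ((M + σ ^ 2 • 1).mulVec v) := by
  rcases eq_or_ne (vecNorm v) 0 with h | h
  · have hv : v = 0 := vecNorm_eq_zero h
    simp [hv, h, vecNorm, Matrix.mulVec_zero]
  · have hpos : 0 < vecNorm v := lt_of_le_of_ne (vecNorm_nonneg v) (Ne.symm h)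
    have key : σ ^ 2 * vecNorm v ^ 2 ≤ ((M + σ ^ 2 • 1).mulVec v) ⬝ᵥ v := by
      have h1 : (M + σ ^ 2 • 1).mulVec v = M.mulVec v + σ ^ 2 • v := by
        simp [Matrix.add_mulVec, Matrix.smul_mulVec]
      rw [h1, add_dotProduct, smul_dotProduct, dot_self]
      have h2 : 0 ≤ M.mulVec v ⬝ᵥ v := by
        have := hM.dotProduct_mulVec_nonneg v
        simpa [dotProduct_comm] using this
      simp only [smul_eq_mul]
      linarith [h2]
    have h3 : ((M + σ ^ 2 • 1).mulVec v) ⬝ᵥ v ≤ vecNorm ((M + σ ^ 2 • 1).mulVec v) * vecNorm v :=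
      dot_le _ _
    have h4 := key.trans h3
    exact mul_le_mul_iff_of_pos_right hpos |>.mp
      (by nlinarith [h4] : σ ^ 2 * vecNorm v * vecNorm v ≤
        vecNorm ((M + σ ^ 2 • 1).mulVec v) * vecNorm v)

theorem stmt_10 (N : ℕ) (y : Fin N → ℝ) (K Ktil : Matrix (Fin N) (Fin N) ℝ)
    (hK : K.PosSemidef) (hKt : Ktil.PosSemidef) (σ : ℝ) (hσ : 0 < σ)
    (α αt : Fin N → ℝ)
    (hα : (K + σ ^ 2 • 1).mulVec α = y) (hαt : (Ktil + σ ^ 2 • 1).mulVec αt = y)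
    (μ μt : Fin N → ℝ) (hμ : μ = K.mulVec α) (hμt : μt = Ktil.mulVec αt) :
    vecNorm (μt - μ) ≤ opNorm (Ktil - K) / σ ^ 2 * vecNorm y := by
  have hα' : K.mulVec α + σ ^ 2 • α = y := by
    rw [← hα, Matrix.add_mulVec, Matrix.smul_mulVec, Matrix.one_mulVec]
  have hαt' : Ktil.mulVec αt + σ ^ 2 • αt = y := by
    rw [← hαt, Matrix.add_mulVec, Matrix.smul_mulVec, Matrix.one_mulVec]
  set v := α - αt with hv
  have step1 : μt - μ = σ ^ 2 • v := by
    have h1 : μ = y - σ ^ 2 • α := by rw [hμ, ← hα']; abel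
    have h2 : μt = y - σ ^ 2 • αt := by rw [hμt, ← hαt']; abel
    rw [h1, h2, hv, smul_sub]; abel
  have step2 : (K + σ ^ 2 • 1).mulVec v = (Ktil - K).mulVec αt := by
    rw [hv, Matrix.mulVec_sub, hα, Matrix.sub_mulVec]
    rw [Matrix.add_mulVec, Matrix.smul_mulVec, Matrix.one_mulVec, ← hαt']
    abel
  have hop : 0 ≤ opNorm (Ktil - K) := norm_nonneg _
  have h3 : σ ^ 2 * vecNorm v ≤ opNorm (Ktil - K) * vecNorm αt := by
    calc σ ^ 2 * vecNorm v ≤ vecNorm ((K + σ ^ 2 • 1).mulVec v) := coercive hK σ v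
      _ = vecNorm ((Ktil - K).mulVec αt) := by rw [step2]
      _ ≤ opNorm (Ktil - K) * vecNorm αt := mulVec_bound _ _
  have h4 : σ ^ 2 * vecNorm αt ≤ vecNorm y := by
    have := coercive hKt σ αt
    rwa [hαt] at this
  have h5 : vecNorm (μt - μ) = σ ^ 2 * vecNorm v := by
    rw [step1, vecNorm_smul, abs_of_pos (by positivity)]
  have hσ2 : (0:ℝ) < σ ^ 2 := by positivity
  rw [h5, div_mul_eq_mul_div, le_div_iff₀ hσ2]
  nlinarith [vecNorm_nonneg v, vecNorm_nonneg αt]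
end
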